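/- Let A ⊆ ℕ^ℕ, let t ↦ <_t be an order representation of A, and let κ be an ordinal. Consider the auxiliary game in which player I, at his i-th move, plays a pair (n_{2i}, ξ_i) ∈ ℕ × κ, player II plays n_{2i+1} ∈ ℕ, and player I wins the resulting play iff x := (n_k)_k ∈ A and for every k and all i, j < k/2: i <_{x↾k} j if and only if ξ_i < ξ_j. If player I has a winning strategy in this auxiliary game, then player I has a winning strategy in the Gale–Stewart game on ℕ with payoff A. -/

import Mathlib

/-- The finite sequence of the first `n` terms of `x`, i.e. `x ↾ n`. -/
def hist {X : Type*} (x : ℕ → X) (n : ℕ) : List X := List.ofFn (fun i : Fin n => x i)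

/-- A play `x` is consistent with a strategy `σ` for player I in the Gale–Stewart game
on ℕ if `x (2k) = σ (x ↾ 2k)` for all `k`. -/
def ConsistentI (σ : List ℕ → ℕ) (x : ℕ → ℕ) : Prop :=
  ∀ k, x (2 * k) = σ (hist x (2 * k))

/-- A strategy `σ` is winning for player I in the Gale–Stewart game on ℕ with payoff `A`
if every play consistent with it lies in `A`. -/
def WinningI (A : Set (ℕ → ℕ)) (σ : List ℕ → ℕ) : Prop :=
  ∀ x : ℕ → ℕ, ConsistentI σ x → x ∈ A

/-- `R` is an order representation of `A ⊆ ℕ^ℕ`: to each finite sequence `t` of naturals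
it assigns a strict linear order `R t` on `{0, 1, …, |t|}`, monotone under initial
segments, such that `x ∈ A` iff the union order `<_x := ⋃ₙ R (x ↾ n)` is wellfounded
(has no infinite strictly descending sequence). -/
structure OrderRep (A : Set (ℕ → ℕ)) (R : List ℕ → ℕ → ℕ → Prop) : Prop where
  dom : ∀ t : List ℕ, ∀ i j, R t i j → i ≤ t.length ∧ j ≤ t.length
  irrefl : ∀ t : List ℕ, ∀ i, ¬ R t i i
  trans : ∀ t : List ℕ, ∀ i j k, R t i j → R t j k → R t i k
  total : ∀ t : List ℕ, ∀ i j, i ≤ t.length → j ≤ t.length → i ≠ j → R t i j ∨ R t j i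
  mono : ∀ t s : List ℕ, t <+: s → ∀ i j, R t i j → R s i j
  mem_iff : ∀ x : ℕ → ℕ,
    (x ∈ A ↔ ¬ ∃ f : ℕ → ℕ, ∀ n : ℕ, ∃ m : ℕ, R (hist x m) (f (n + 1)) (f n))

/-- Player I wins the play `(x, ξ)` of the auxiliary game iff `x ∈ A` and for every `k`
and all `i, j < k / 2`: `i <_{x ↾ k} j` iff `ξ_i < ξ_j`. -/
def AuxPayoff (A : Set (ℕ → ℕ)) (R : List ℕ → ℕ → ℕ → Prop) {O : Type*} [LT O]
    (x : ℕ → ℕ) (ξ : ℕ → O) : Prop :=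
  x ∈ A ∧ ∀ k i j, i < k / 2 → j < k / 2 → (R (hist x k) i j ↔ ξ i < ξ j)

/-- A strategy for player I in the auxiliary game assigns to each position (the
sequences of natural-number moves and ordinal moves made so far) a pair
`(n_{2i}, ξ_i) ∈ ℕ × κ`; it is winning if every play consistent with it satisfies
the auxiliary payoff. -/
def AuxWinningI (A : Set (ℕ → ℕ)) (R : List ℕ → ℕ → ℕ → Prop) {O : Type*} [LT O]
    (σ : List ℕ × List O → ℕ × O) : Prop :=
  ∀ (x : ℕ → ℕ) (ξ : ℕ → O),
    (∀ i, (x (2 * i), ξ i) = σ (hist x (2 * i), hist ξ i)) → AuxPayoff A R x ξ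


/-- Reconstruct the ordinal moves of the auxiliary strategy from the natural-number
history. -/
def auxOrdList {O : Type*} (σ : List ℕ × List O → ℕ × O) : ℕ → List ℕ → List O
  | 0, _ => []
  | i+1, t => auxOrdList σ i t ++ [(σ (t.take (2*i), auxOrdList σ i t)).2]

theorem auxOrdList_congr {O : Type*} (σ : List ℕ × List O → ℕ × O) :
    ∀ (i : ℕ) (t s : List ℕ), t.take (2*i) = s.take (2*i) →
      auxOrdList σ i t = auxOrdList σ i s := by
  intro i
  induction i with
  | zero => intro t s h; rfl
  | succ i ih =>
    intro t s h
    have h' : t.take (2*i) = s.take (2*i) := by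
      have := congrArg (List.take (2*i)) h
      simpa [List.take_take, Nat.min_eq_left (by omega : 2*i ≤ 2*(i+1))] using this
    simp [auxOrdList, ih t s h', h']

theorem hist_take {X : Type*} (x : ℕ → X) (m n : ℕ) (h : m ≤ n) :
    (hist x n).take m = hist x m := by
  apply List.ext_getElem
  · simp [hist]; omega
  · intro i h1 h2
    simp [hist, List.getElem_take]

theorem hist_succ {X : Type*} (x : ℕ → X) (n : ℕ) :
    hist x (n+1) = hist x n ++ [x n] := by
  rw [hist, List.ofFn_succ']
  simp [hist, List.concat_eq_append, Fin.last]

/-- If player I has a winning strategy in the auxiliary game (with ordinal moves drawn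
from the ordinal `κ`, formalized as a well-ordered set `O`) associated to an order
representation of `A`, then player I has a winning strategy in the Gale–Stewart game
on ℕ with payoff `A`. -/
theorem winningI_of_auxWinningI (A : Set (ℕ → ℕ)) (R : List ℕ → ℕ → ℕ → Prop)
    (hR : OrderRep A R) (O : Type*) [LinearOrder O] [WellFoundedLT O]
    (σ : List ℕ × List O → ℕ × O) (hσ : AuxWinningI A R σ) :
    ∃ σ' : List ℕ → ℕ, WinningI A σ' := by
  refine ⟨fun t => (σ (t, auxOrdList σ (t.length / 2) t)).1, ?_⟩
  intro x hx
  set ξ : ℕ → O := fun i => (σ (hist x (2*i), auxOrdList σ i (hist x (2*i)))).2 with hξ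
  have key : ∀ i, hist ξ i = auxOrdList σ i (hist x (2*i)) := by
    intro i
    induction i with
    | zero => rfl
    | succ i ih =>
      have h2 : (hist x (2*(i+1))).take (2*i) = hist x (2*i) := hist_take x _ _ (by omega)
      have h3 : auxOrdList σ i (hist x (2*(i+1))) = auxOrdList σ i (hist x (2*i)) := by
        apply auxOrdList_congr
        rw [hist_take x _ _ (by omega), hist_take x _ _ (by omega)]
      rw [hist_succ, auxOrdList, h2, h3, ih, hξ]
  have cons : ∀ i, (x (2*i), ξ i) = σ (hist x (2*i), hist ξ i) := by
    intro i
    have h := hx i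
    have hlen : (hist x (2*i)).length = 2*i := by simp [hist]
    apply Prod.ext
    · simpa [hlen, Nat.mul_div_cancel_left i (by norm_num : 0 < 2), key i] using h
    · exact (congrArg (fun l => (σ (hist x (2*i), l)).2) (key i)).symm
  exact (hσ x ξ cons).1
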